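/- Let F > 0 and σ > 0. Define erf(y) = (2/√π)·∫₀^y exp(−v²) dv, erfi(y) = (2/√π)·∫₀^y exp(v²) dv, and 𝐼_F(u) = (1/F)·(erf(u/(√2·σ)) − 2u²/(π·σ²·erfi(u/(√2·σ)))) for u > 0. Then the derivative of 𝐼_F tends to 0 as u → ∞: Tendsto (fun u => deriv 𝐼_F u) atTop (nhds 0). -/

import Mathlib

open Real Filter MeasureTheory

private lemma contExpSq : Continuous fun v : ℝ => Real.exp (v ^ 2) :=
  Real.continuous_exp.comp (continuous_pow 2)

private lemma contExpNegSq : Continuous fun v : ℝ => Real.exp (-v ^ 2) :=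
  Real.continuous_exp.comp (continuous_pow 2).neg

private lemma intIntExpSq (a b : ℝ) :
    IntervalIntegrable (fun v : ℝ => Real.exp (v ^ 2)) volume a b :=
  contExpSq.intervalIntegrable a b

private lemma hasDerivI (x : ℝ) :
    HasDerivAt (fun y : ℝ => ∫ v in (0:ℝ)..y, Real.exp (v ^ 2)) (Real.exp (x ^ 2)) x :=
  intervalIntegral.integral_hasDerivAt_right (intIntExpSq 0 x)
    (contExpSq.stronglyMeasurableAtFilter _ _) contExpSq.continuousAt

private lemma hasDerivJ (x : ℝ) :
    HasDerivAt (fun y : ℝ => ∫ v in (0:ℝ)..y, Real.exp (-v ^ 2)) (Real.exp (-x ^ 2)) x :=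
  intervalIntegral.integral_hasDerivAt_right (contExpNegSq.intervalIntegrable 0 x)
    (contExpNegSq.stronglyMeasurableAtFilter _ _) contExpNegSq.continuousAt

private lemma I_pos {x : ℝ} (hx : 0 < x) :
    0 < ∫ v in (0:ℝ)..x, Real.exp (v ^ 2) :=
  intervalIntegral.intervalIntegral_pos_of_pos (intIntExpSq 0 x) (fun v => Real.exp_pos _) hx

private lemma I_lower {x : ℝ} (hx : 1 ≤ x) :
    Real.exp ((x - 1) ^ 2) ≤ ∫ v in (0:ℝ)..x, Real.exp (v ^ 2) := by
  have h1 : (0:ℝ) ≤ x - 1 := by linarith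
  have split : (∫ v in (0:ℝ)..(x-1), Real.exp (v ^ 2))
      + ∫ v in (x-1)..x, Real.exp (v ^ 2) = ∫ v in (0:ℝ)..x, Real.exp (v ^ 2) :=
    intervalIntegral.integral_add_adjacent_intervals (intIntExpSq 0 (x-1)) (intIntExpSq (x-1) x)
  have h2 : (0:ℝ) ≤ ∫ v in (0:ℝ)..(x-1), Real.exp (v ^ 2) :=
    intervalIntegral.integral_nonneg h1 (fun v _ => (Real.exp_pos _).le)
  have h3 : Real.exp ((x-1)^2) ≤ ∫ v in (x-1)..x, Real.exp (v ^ 2) := by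
    have hmono : (∫ _ in (x-1)..x, Real.exp ((x-1)^2)) ≤ ∫ v in (x-1)..x, Real.exp (v ^ 2) := by
      apply intervalIntegral.integral_mono_on (by linarith) intervalIntegrable_const
        (intIntExpSq _ _)
      intro v hv
      have hv1 := hv.1
      exact Real.exp_le_exp.2 (by nlinarith)
    rw [intervalIntegral.integral_const, smul_eq_mul] at hmono
    have : x - (x - 1) = 1 := by ring
    rw [this, one_mul] at hmono
    exact hmono
  linarith

/-- Any polynomial times `exp` of a downward-opening quadratic tends to `0`. -/
private lemma aux_tendsto (a b d : ℝ) (ha : 0 < a) (n : ℕ) :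
    Tendsto (fun u : ℝ => u ^ n * Real.exp (-(a * u ^ 2) + b * u + d)) atTop (nhds 0) := by
  apply squeeze_zero' ?_ ?_ (tendsto_pow_mul_exp_neg_atTop_nhds_zero n)
  · filter_upwards [eventually_ge_atTop (0:ℝ)] with u hu
    positivity
  · filter_upwards [eventually_ge_atTop (1:ℝ),
      eventually_ge_atTop ((|b| + 1 + |d|)/a)] with u h1 h2
    have hu0 : (0:ℝ) ≤ u := le_trans zero_le_one h1
    have h3 : |b| + 1 + |d| ≤ a * u := (div_le_iff₀ ha).mp h2 |>.trans_eq (mul_comm u a)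
    have hb : -(a * u ^ 2) + b * u + d ≤ -u := by
      nlinarith [le_abs_self b, le_abs_self d, abs_nonneg d, abs_nonneg b,
        mul_le_mul_of_nonneg_right h3 hu0]
    exact mul_le_mul_of_nonneg_left (Real.exp_le_exp.2 hb) (by positivity)

/-- The derivative of the joint Fisher information for the flux,
`𝐼_F(u) = (1/F)(erf(u/(√2σ)) − 2u²/(πσ² erfi(u/(√2σ))))`, tends to `0` as the
aperture radius `u → ∞` (Theorem 2 of the paper). -/
theorem fisherInfoFlux_deriv_tendsto_zero (F σ : ℝ) (hF : 0 < F) (hσ : 0 < σ)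
    (IF : ℝ → ℝ)
    (hIF : ∀ u : ℝ, 0 < u → IF u =
      (1 / F) * (((2 / Real.sqrt π) * ∫ v in (0:ℝ)..(u / (Real.sqrt 2 * σ)), Real.exp (-v ^ 2))
        - 2 * u ^ 2 / (π * σ ^ 2 *
            ((2 / Real.sqrt π) * ∫ v in (0:ℝ)..(u / (Real.sqrt 2 * σ)), Real.exp (v ^ 2))))) :
    Tendsto (fun u => deriv IF u) atTop (nhds 0) := by
  have hπ : 0 < Real.sqrt π := Real.sqrt_pos.2 Real.pi_pos
  set s : ℝ := Real.sqrt 2 * σ with hs_def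
  have hs : 0 < s := mul_pos (Real.sqrt_pos.2 two_pos) hσ
  set c : ℝ := π * σ ^ 2 * (2 / Real.sqrt π) with hc_def
  have hc : 0 < c := by
    rw [hc_def]
    positivity
  set I : ℝ → ℝ := fun y => ∫ v in (0:ℝ)..y, Real.exp (v ^ 2) with hI_def
  set J : ℝ → ℝ := fun y => ∫ v in (0:ℝ)..y, Real.exp (-v ^ 2) with hJ_def
  set G : ℝ → ℝ := fun u => (1 / F) * ((2 / Real.sqrt π) * J (u / s)
      - 2 * u ^ 2 / (c * I (u / s))) with hG_def
  set D : ℝ → ℝ := fun u => (1 / F) * ((2 / Real.sqrt π) * (Real.exp (-(u/s) ^ 2) * (1/s))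
      - ((4 * u) * (c * I (u/s)) - (2 * u ^ 2) * (c * (Real.exp ((u/s) ^ 2) * (1/s))))
        / (c * I (u/s)) ^ 2) with hD_def
  -- the derivative of IF eventually equals D
  have hIpos : ∀ u : ℝ, 0 < u → 0 < I (u / s) := fun u hu => I_pos (div_pos hu hs)
  have hderiv : ∀ u : ℝ, 0 < u → HasDerivAt G (D u) u := by
    intro u hu
    have hlin : HasDerivAt (fun w : ℝ => w / s) (1 / s) u := by
      simpa using (hasDerivAt_id u).div_const s
    have hJ' : HasDerivAt (fun w : ℝ => J (w / s)) (Real.exp (-(u/s) ^ 2) * (1/s)) u :=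
      by have := (hasDerivJ (u / s)).comp u hlin; exact this
    have hI' : HasDerivAt (fun w : ℝ => I (w / s)) (Real.exp ((u/s) ^ 2) * (1/s)) u :=
      by have := (hasDerivI (u / s)).comp u hlin; exact this
    have hden : HasDerivAt (fun w : ℝ => c * I (w / s))
        (c * (Real.exp ((u/s) ^ 2) * (1/s))) u := hI'.const_mul c
    have hnum : HasDerivAt (fun w : ℝ => 2 * w ^ 2) (4 * u) u := by
      have := (hasDerivAt_pow 2 u).const_mul (2:ℝ)
      simpa [mul_comm, mul_assoc, mul_left_comm] using this.congr_deriv (by norm_num; ring)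
    have hden_ne : c * I (u / s) ≠ 0 := (mul_pos hc (hIpos u hu)).ne'
    have hfrac : HasDerivAt (fun w : ℝ => 2 * w ^ 2 / (c * I (w / s)))
        (((4 * u) * (c * I (u/s)) - (2 * u ^ 2) * (c * (Real.exp ((u/s) ^ 2) * (1/s))))
          / (c * I (u/s)) ^ 2) u := hnum.div hden hden_ne
    exact ((hJ'.const_mul (2 / Real.sqrt π)).sub hfrac).const_mul (1 / F)
  have hev : (fun u => deriv IF u) =ᶠ[atTop] D := by
    filter_upwards [eventually_gt_atTop (0:ℝ)] with u hu
    have heq : IF =ᶠ[nhds u] G := by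
      filter_upwards [isOpen_Ioi.mem_nhds hu] with x hx
      rw [hIF x hx, hG_def]
      simp only [hI_def, hJ_def, hc_def]
      ring
    rw [heq.deriv_eq, (hderiv u hu).deriv]
  rw [tendsto_congr' hev]
  -- now show D tends to 0
  have hT1 : Tendsto (fun u : ℝ => (2 / Real.sqrt π) * (Real.exp (-(u/s) ^ 2) * (1/s)))
      atTop (nhds 0) := by
    have := (aux_tendsto (1/s^2) 0 0 (by positivity) 0).const_mul ((2 / Real.sqrt π) * (1/s))
    rw [mul_zero] at this
    apply this.congr
    intro u
    rw [pow_zero, one_mul]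
    have : -(u/s) ^ 2 = -(1/s^2 * u ^ 2) + 0 * u + 0 := by field_simp; ring
    rw [this]; ring
  have hQ1 : Tendsto (fun u : ℝ => 4 * u / (c * I (u/s))) atTop (nhds 0) := by
    have hbnd := (aux_tendsto (1/s^2) (2/s) (-1) (by positivity) 1).const_mul (4 / c)
    rw [mul_zero] at hbnd
    apply squeeze_zero' ?_ ?_ hbnd
    · filter_upwards [eventually_gt_atTop (0:ℝ)] with u hu
      exact div_nonneg (by linarith) (mul_pos hc (hIpos u hu)).le
    · filter_upwards [eventually_ge_atTop s, eventually_gt_atTop (0:ℝ)] with u hus hu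
      have hx1 : 1 ≤ u / s := (one_le_div hs).2 hus
      have hIl : Real.exp ((u/s - 1) ^ 2) ≤ I (u/s) := I_lower hx1
      have hle : c * Real.exp ((u/s - 1) ^ 2) ≤ c * I (u/s) :=
        mul_le_mul_of_nonneg_left hIl hc.le
      have h := div_le_div_of_nonneg_left (by linarith : (0:ℝ) ≤ 4 * u)
        (mul_pos hc (Real.exp_pos _)) hle
      refine h.trans (le_of_eq ?_)
      have harg : -((u/s - 1) ^ 2) = -(1/s^2 * u ^ 2) + (2/s) * u + (-1) := by field_simp; ring
      have hre : Real.exp (-(1/s^2 * u ^ 2) + (2/s) * u + (-1))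
          = (Real.exp ((u/s - 1) ^ 2))⁻¹ := by
        rw [← Real.exp_neg]; congr 1; linarith [harg]
      rw [pow_one, hre]
      field_simp
  have hQ2 : Tendsto (fun u : ℝ =>
      (2 * u ^ 2) * (c * (Real.exp ((u/s) ^ 2) * (1/s))) / (c * I (u/s)) ^ 2)
      atTop (nhds 0) := by
    have hbnd := (aux_tendsto (1/s^2) (4/s) (-2) (by positivity) 2).const_mul (2 / (c * s))
    rw [mul_zero] at hbnd
    apply squeeze_zero' ?_ ?_ hbnd
    · filter_upwards [eventually_ge_atTop (0:ℝ)] with u hu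
      exact div_nonneg (mul_nonneg (by positivity)
        (mul_nonneg hc.le (mul_nonneg (Real.exp_pos _).le (one_div_nonneg.2 hs.le))))
        (sq_nonneg _)
    · filter_upwards [eventually_ge_atTop s, eventually_gt_atTop (0:ℝ)] with u hus hu
      have hx1 : 1 ≤ u / s := (one_le_div hs).2 hus
      have hIl : Real.exp ((u/s - 1) ^ 2) ≤ I (u/s) := I_lower hx1
      have hle : (c * Real.exp ((u/s - 1) ^ 2)) ^ 2 ≤ (c * I (u/s)) ^ 2 := by
        apply pow_le_pow_left₀ (mul_pos hc (Real.exp_pos _)).le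
        exact mul_le_mul_of_nonneg_left hIl hc.le
      have h := div_le_div_of_nonneg_left
        (by positivity : (0:ℝ) ≤ (2 * u ^ 2) * (c * (Real.exp ((u/s) ^ 2) * (1/s))))
        (by positivity : (0:ℝ) < (c * Real.exp ((u/s - 1) ^ 2)) ^ 2) hle
      refine h.trans (le_of_eq ?_)
      have hexp : Real.exp ((u/s) ^ 2) / (Real.exp ((u/s - 1) ^ 2)) ^ 2
          = Real.exp (-(1/s^2 * u ^ 2) + (4/s) * u + (-2)) := by
        rw [← Real.exp_nat_mul, ← Real.exp_sub]
        congr 1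
        field_simp
        ring
      rw [mul_pow, ← hexp]
      field_simp
  -- combine
  have hQ : Tendsto (fun u : ℝ =>
      ((4 * u) * (c * I (u/s)) - (2 * u ^ 2) * (c * (Real.exp ((u/s) ^ 2) * (1/s))))
        / (c * I (u/s)) ^ 2) atTop (nhds 0) := by
    have := hQ1.sub hQ2
    rw [sub_zero] at this
    apply this.congr' ?_
    filter_upwards [eventually_gt_atTop (0:ℝ)] with u hu
    have hden_ne : c * I (u/s) ≠ 0 := (mul_pos hc (hIpos u hu)).ne'
    field_simp
  have := (hT1.sub hQ).const_mul (1 / F)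
  rw [sub_zero, mul_zero] at this
  exact this
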